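/- For S ∈ F^{np×qr} and permutation matrices interchanging two indices, Λ_{(n,q)}^{(p,r)}((P_{i₁,i₂} ⊗ P_{k₁,k₂}) S (P_{j₁,j₂} ⊗ P_{l₁,l₂})) = (P_{i₁,i₂} ⊗ P_{j₁,j₂}) Λ_{(n,q)}^{(p,r)}(S) (P_{k₁,k₂} ⊗ P_{l₁,l₂}), where 1 ≤ i₁,i₂ ≤ n, 1 ≤ j₁,j₂ ≤ q, 1 ≤ k₁,k₂ ≤ p, 1 ≤ l₁,l₂ ≤ r. -/

import Mathlib

open Matrix
open scoped Kronecker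

/-- The permutation matrix interchanging rows/columns a and b. -/
def swapMat {F : Type*} [Zero F] [One F] {n : ℕ} (a b : Fin n) :
    Matrix (Fin n) (Fin n) F :=
  fun i j => if j = Equiv.swap a b i then 1 else 0

/-- The matrix reordering Λ_{(n,q)}^{(p,r)}. -/
def Lam {F : Type*} (n q p r : ℕ)
    (S : Matrix (Fin p × Fin n) (Fin r × Fin q) F) :
    Matrix (Fin q × Fin n) (Fin r × Fin p) F :=
  fun a b => S (b.2, a.2) (b.1, a.1)

lemma kron_swap {F : Type*} [Field F] {m n : ℕ} (a b : Fin m) (c d : Fin n)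
    (x : Fin m × Fin n) (y : Fin m × Fin n) :
    (swapMat a b ⊗ₖ swapMat c d : Matrix _ _ F) x y =
      if y = (Equiv.swap a b x.1, Equiv.swap c d x.2) then 1 else 0 := by
  simp [Matrix.kroneckerMap_apply, swapMat, Prod.ext_iff, ite_and, Prod.mk.injEq]
  split_ifs with h1 h2 h2 <;> simp_all

lemma swap_mul {F : Type*} [Field F] {m n : ℕ} (a b : Fin m) (c d : Fin n)
    {α : Type*} [Fintype α] (M : Matrix (Fin m × Fin n) α F) (x : Fin m × Fin n) (y : α) :
    ((swapMat (F := F) a b ⊗ₖ swapMat (F := F) c d) * M) x y = M (Equiv.swap a b x.1, Equiv.swap c d x.2) y := by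
  simp only [Matrix.mul_apply, kron_swap]
  rw [Finset.sum_eq_single (Equiv.swap a b x.1, Equiv.swap c d x.2)] <;> simp +contextual

lemma mul_swap {F : Type*} [Field F] {m n : ℕ} (a b : Fin m) (c d : Fin n)
    {α : Type*} [Fintype α] (M : Matrix α (Fin m × Fin n) F) (x : α) (y : Fin m × Fin n) :
    (M * (swapMat (F := F) a b ⊗ₖ swapMat (F := F) c d)) x y = M x (Equiv.swap a b y.1, Equiv.swap c d y.2) := by
  simp only [Matrix.mul_apply, kron_swap]
  rw [Finset.sum_eq_single (Equiv.swap a b y.1, Equiv.swap c d y.2)]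
  · simp
  · rintro ⟨u, v⟩ _ h
    rw [if_neg, mul_zero]
    rintro rfl
    simp at h
  · simp
lemma cstar_mul_eq {F : Type*} [Field F] {α β γ : Type*} [Fintype β] (A : Matrix α β F) (B : Matrix β γ F) :
    @HMul.hMul (Matrix α β F) (Matrix β γ F) (Matrix α γ F) CStarMatrix.instHMulOfFintypeOfMulOfAddCommMonoid A B = A * B := rfl
/-- Λ((P_{i₁,i₂} ⊗ P_{k₁,k₂}) S (P_{j₁,j₂} ⊗ P_{l₁,l₂}))
= (P_{i₁,i₂} ⊗ P_{j₁,j₂}) Λ(S) (P_{k₁,k₂} ⊗ P_{l₁,l₂}), with indices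
i ∈ [n], j ∈ [q], k ∈ [p], l ∈ [r] (Kronecker factors ordered to match the
block row/column index conventions). -/
theorem stmt11 {F : Type*} [Field F] {n q p r : ℕ}
    (S : Matrix (Fin p × Fin n) (Fin r × Fin q) F)
    (i₁ i₂ : Fin n) (j₁ j₂ : Fin q) (k₁ k₂ : Fin p) (l₁ l₂ : Fin r) :
    Lam n q p r ((swapMat (F := F) k₁ k₂ ⊗ₖ swapMat (F := F) i₁ i₂) * S * (swapMat l₁ l₂ ⊗ₖ swapMat j₁ j₂)) =
      (swapMat (F := F) j₁ j₂ ⊗ₖ swapMat (F := F) i₁ i₂) * Lam n q p r S * (swapMat l₁ l₂ ⊗ₖ swapMat k₁ k₂) := by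
  ext a b
  simp only [Lam, cstar_mul_eq, Matrix.mul_assoc, swap_mul, mul_swap]
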